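/- For every n ≥ 1, the number of arches of Dyck paths with catastrophes of length n (paths whose only return to altitude 0 is at the final step) equals the number of arches of 1-horizontal Dyck paths of length n (1-horizontal Dyck paths whose only return to altitude 0 is at the final step). -/

import Mathlib

/-- Validity of a path with catastrophes over the jump set `J`, starting from
altitude `h`: each step is either a jump `s ∈ J` keeping the altitude
nonnegative, or a catastrophe `s = -h` from an altitude `h > 0` with `-h ∉ J`
(landing at altitude `0`). -/
def CatValidFrom (J : Finset ℤ) : ℤ → List ℤ → Prop
  | _, [] => True
  | h, s :: r =>
    ((s ∈ J ∧ 0 ≤ h + s) ∨ (s = -h ∧ 0 < h ∧ -h ∉ J)) ∧ CatValidFrom J (h + s) r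

/-- The jump set of Dyck paths. For this jump set a catastrophe is a jump
`-h` from an altitude `h ≥ 2` to altitude `0`. -/
def dyckJ : Finset ℤ := {-1, 1}

/-- `l` is a Dyck path with catastrophes of length `n`. -/
def DyckCat (n : ℕ) (l : List ℤ) : Prop :=
  l.length = n ∧ CatValidFrom dyckJ 0 l ∧ l.sum = 0

/-- Validity of a 1-horizontal Dyck path starting from altitude `h`: steps are
`+1`, `-1` (only from altitude `≥ 1`), and a horizontal step `0` allowed
exactly at altitude `1`. -/
def HValidFrom : ℤ → List ℤ → Prop
  | _, [] => True
  | h, s :: r =>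
    (s = 1 ∨ (s = -1 ∧ 1 ≤ h) ∨ (s = 0 ∧ h = 1)) ∧ HValidFrom (h + s) r

/-- `l` is a 1-horizontal Dyck path of length `n`. -/
def HDyck (n : ℕ) (l : List ℤ) : Prop :=
  l.length = n ∧ HValidFrom 0 l ∧ l.sum = 0

/-- The arch condition for a path of length `n`: the altitude after step `i`
is strictly positive for all `1 ≤ i < n` (the only return to altitude `0` is
at the final step). -/
def IsArch (n : ℕ) (l : List ℤ) : Prop :=
  ∀ i : ℕ, 1 ≤ i → i < n → 0 < (l.take i).sum

-- auxiliary defs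
def z2o (s : ℤ) : ℤ := if s = 0 then 1 else s

def mps : List ℤ → ℤ
  | [] => 0
  | s :: t => min 0 (s + mps t)

def psi : List ℤ → List ℤ
  | [] => []
  | s :: t => (if s = 1 ∧ 0 ≤ mps t then 0 else s) :: psi t

lemma mps_nonpos (t : List ℤ) : mps t ≤ 0 := by cases t <;> simp [mps]

lemma le_mps {t : List ℤ} {c : ℤ} (h0 : c ≤ 0) (h : ∀ k, c ≤ (t.take k).sum) :
    c ≤ mps t := by
  induction t generalizing c with
  | nil => simpa [mps] using h0
  | cons s r ih =>
    have h1 : c ≤ s := by simpa using h 1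
    have hr : c - s ≤ mps r := by
      refine ih (by omega) (fun k => ?_)
      have := h (k + 1)
      simp [List.take_succ_cons] at this
      omega
    simp only [mps, le_min_iff]
    omega

lemma mps_eq_zero {t : List ℤ} (h : ∀ k, 0 ≤ (t.take k).sum) : mps t = 0 :=
  le_antisymm (mps_nonpos t) (le_mps le_rfl h)

lemma psi_length (t : List ℤ) : (psi t).length = t.length := by
  induction t with
  | nil => rfl
  | cons s r ih => simp [psi, ih]

lemma sum_psi {R : List ℤ} (h : ∀ s ∈ R, s = 1 ∨ s = -1) : (psi R).sum = mps R := by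
  induction R with
  | nil => simp [psi, mps]
  | cons s t ih =>
    have ht := ih (fun x hx => h x (List.mem_cons_of_mem _ hx))
    have hs := h s (List.mem_cons_self)
    have hmt := mps_nonpos t
    by_cases hc : s = 1 ∧ 0 ≤ mps t
    · have : mps t = 0 := le_antisymm hmt hc.2
      simp [psi, hc, mps, ht, hc.1, this]
    · rcases hs with rfl | rfl
      · have : mps t < 0 := by
          rcases lt_or_ge (mps t) 0 with h' | h'
          · exact h'
          · exact absurd ⟨rfl, h'⟩ hc
        simp only [psi, if_neg hc, List.sum_cons, ht, mps]
        omega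
      · simp only [psi, if_neg hc, List.sum_cons, ht, mps]
        omega

lemma hvalid_psi {R : List ℤ} (h : ∀ s ∈ R, s = 1 ∨ s = -1) :
    ∀ b : ℤ, b + mps R = 1 → HValidFrom b (psi R) := by
  induction R with
  | nil => intro b _; trivial
  | cons s t ih =>
    intro b hb
    have ht := fun x hx => h x (List.mem_cons_of_mem _ hx)
    have hs := h s (List.mem_cons_self)
    have hmt := mps_nonpos t
    simp only [mps] at hb
    by_cases hc : s = 1 ∧ 0 ≤ mps t
    · have hm0 : mps t = 0 := le_antisymm hmt hc.2
      have hb1 : b = 1 := by rw [hc.1, hm0] at hb; simp at hb; omega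
      simp only [psi, if_pos hc]
      exact ⟨Or.inr (Or.inr ⟨rfl, hb1⟩), ih ht (b + 0) (by omega)⟩
    · simp only [psi, if_neg hc]
      rcases hs with rfl | rfl
      · have hlt : mps t < 0 := by
          rcases lt_or_ge (mps t) 0 with h' | h'
          · exact h'
          · exact absurd ⟨rfl, h'⟩ hc
        exact ⟨Or.inl rfl, ih ht (b + 1) (by omega)⟩
      · exact ⟨Or.inr (Or.inl ⟨rfl, by omega⟩), ih ht (b + -1) (by omega)⟩

-- positivity of prefix sums of psi R
lemma psi_take {R : List ℤ} (h : ∀ s ∈ R, s = 1 ∨ s = -1) :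
    ∀ b : ℤ, b + mps R = 1 → ∀ k, 1 ≤ b + ((psi R).take k).sum := by
  induction R with
  | nil => intro b hb k; simp [mps] at hb; simp [psi]; omega
  | cons s t ih =>
    intro b hb k
    have ht := fun x hx => h x (List.mem_cons_of_mem _ hx)
    have hs := h s (List.mem_cons_self)
    have hmt := mps_nonpos t
    simp only [mps] at hb
    have hb1 : 1 ≤ b := by omega
    cases k with
    | zero => simpa using hb1
    | succ k =>
      by_cases hc : s = 1 ∧ 0 ≤ mps t
      · have hm0 : mps t = 0 := le_antisymm hmt hc.2
        have := ih ht b (by omega) k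
        simp only [psi, if_pos hc, List.take_succ_cons, List.sum_cons]
        omega
      · rcases hs with rfl | rfl
        · have := ih ht (b + 1) (by
            have hlt : mps t < 0 := by
              rcases lt_or_ge (mps t) 0 with h' | h'
              · exact h'
              · exact absurd ⟨rfl, h'⟩ hc
            omega) k
          simp only [psi, if_neg hc, List.take_succ_cons, List.sum_cons]
          omega
        · have := ih ht (b + -1) (by omega) k
          simp only [psi, if_neg hc, List.take_succ_cons, List.sum_cons]
          omega

lemma map_z2o_psi {R : List ℤ} (h : ∀ s ∈ R, s = 1 ∨ s = -1) :
    (psi R).map z2o = R := by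
  induction R with
  | nil => rfl
  | cons s t ih =>
    have ht := ih (fun x hx => h x (List.mem_cons_of_mem _ hx))
    have hs := h s (List.mem_cons_self)
    by_cases hc : s = 1 ∧ 0 ≤ mps t
    · simp [psi, hc, z2o, ht, hc.1]
    · have hs0 : s ≠ 0 := by rcases hs with rfl | rfl <;> norm_num
      simp [psi, hc, z2o, ht, hs0]

lemma psi_map_z2o {q : List ℤ} :
    ∀ b : ℤ, HValidFrom b q → (∀ k, 1 ≤ b + (q.take k).sum) → b + q.sum = 1 →
      psi (q.map z2o) = q ∧ mps (q.map z2o) = 1 - b := by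
  induction q with
  | nil =>
    intro b _ _ hsum
    simp at hsum
    simp [psi, mps, hsum]
  | cons s t ih =>
    intro b hv hpos hsum
    obtain ⟨hstep, hv'⟩ := hv
    have hb1 : 1 ≤ b := by simpa using hpos 0
    have hpos' : ∀ k, 1 ≤ (b + s) + (t.take k).sum := by
      intro k
      have := hpos (k + 1)
      simp [List.take_succ_cons] at this
      omega
    have hsum' : (b + s) + t.sum = 1 := by simp at hsum; omega
    obtain ⟨ih1, ih2⟩ := ih (b + s) hv' hpos' hsum'
    rcases hstep with rfl | ⟨rfl, hb⟩ | ⟨rfl, hb⟩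
    · -- s = 1 : not converted since mps (map z2o t) = 1 - (b+1) = -b < 0
      have hz : z2o (1 : ℤ) = 1 := by norm_num [z2o]
      have hcond : ¬ ((1 : ℤ) = 1 ∧ 0 ≤ mps (t.map z2o)) := by
        rw [ih2]; intro ⟨_, h'⟩; omega
      constructor
      · simp only [List.map_cons, hz, psi]
        rw [if_neg (fun h => hcond ⟨rfl, h.2⟩), ih1]
      · simp only [List.map_cons, hz, mps, ih2]
        omega
    · -- s = -1
      have hz : z2o (-1 : ℤ) = -1 := by norm_num [z2o]
      have hcond : ¬ ((-1 : ℤ) = 1 ∧ 0 ≤ mps (t.map z2o)) := by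
        intro ⟨h', _⟩; norm_num at h'
      constructor
      · simp only [List.map_cons, hz, psi]
        rw [if_neg hcond, ih1]
      · simp only [List.map_cons, hz, mps, ih2]
        omega
    · -- s = 0, b = 1
      have hz : z2o (0 : ℤ) = 1 := by norm_num [z2o]
      have hcond : (1 : ℤ) = 1 ∧ 0 ≤ mps (t.map z2o) := by
        rw [ih2]; exact ⟨rfl, by omega⟩
      constructor
      · simp only [List.map_cons, hz, psi]
        rw [if_pos ⟨trivial, hcond.2⟩, ih1]
      · simp only [List.map_cons, hz, mps, ih2, hb]
        omega

lemma hvalid_append {xs ys : List ℤ} :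
    ∀ a : ℤ, HValidFrom a (xs ++ ys) ↔ HValidFrom a xs ∧ HValidFrom (a + xs.sum) ys := by
  induction xs with
  | nil => intro a; simp [HValidFrom]
  | cons s t ih =>
    intro a
    simp only [List.cons_append, HValidFrom, List.append_eq, ih (a + s), List.sum_cons, and_assoc,
      add_assoc]

lemma catvalid_append {J : Finset ℤ} {xs ys : List ℤ} :
    ∀ a : ℤ, CatValidFrom J a (xs ++ ys) ↔
      CatValidFrom J a xs ∧ CatValidFrom J (a + xs.sum) ys := by
  induction xs with
  | nil => intro a; simp [CatValidFrom]
  | cons s t ih =>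
    intro a
    simp only [List.cons_append, CatValidFrom, List.append_eq, ih (a + s), List.sum_cons, and_assoc,
      add_assoc]

lemma mem_dyckJ {s : ℤ} : s ∈ dyckJ ↔ s = -1 ∨ s = 1 := by
  simp [dyckJ]

-- entries of a cat-valid path with positive altitudes are ±1
lemma catvalid_entries {R : List ℤ} :
    ∀ a : ℤ, CatValidFrom dyckJ a R → (∀ k, k ≤ R.length → 0 < a + (R.take k).sum) →
      ∀ s ∈ R, s = 1 ∨ s = -1 := by
  induction R with
  | nil => intro a _ _ s hs; simp at hs
  | cons s t ih =>
    intro a hv hpos x hx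
    obtain ⟨hstep, hv'⟩ := hv
    have hs : s = 1 ∨ s = -1 := by
      rcases hstep with ⟨hmem, _⟩ | ⟨hcat, _, _⟩
      · rcases mem_dyckJ.1 hmem with h | h
        · exact Or.inr h
        · exact Or.inl h
      · exfalso
        have := hpos 1 (by simp)
        simp [List.take_succ_cons] at this
        omega
    rcases List.mem_cons.1 hx with rfl | hx'
    · exact hs
    · refine ih (a + s) hv' (fun k hk => ?_) x hx'
      have := hpos (k + 1) (by simpa using Nat.succ_le_succ hk)
      simp [List.take_succ_cons] at this
      omega

lemma hvalid_entries {q : List ℤ} :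
    ∀ a : ℤ, HValidFrom a q → ∀ s ∈ q, s = 1 ∨ s = -1 ∨ s = 0 := by
  induction q with
  | nil => intro a _ s hs; simp at hs
  | cons s t ih =>
    intro a hv x hx
    obtain ⟨hstep, hv'⟩ := hv
    rcases List.mem_cons.1 hx with rfl | hx'
    · rcases hstep with rfl | ⟨rfl, _⟩ | ⟨rfl, _⟩
      · exact Or.inl rfl
      · exact Or.inr (Or.inl rfl)
      · exact Or.inr (Or.inr rfl)
    · exact ih (a + s) hv' x hx'

-- cat-validity of an all-±1 path with nonnegative altitudes
lemma catvalid_of_pm {q : List ℤ} :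
    ∀ a : ℤ, (∀ s ∈ q, s = 1 ∨ s = -1) → (∀ k, 0 ≤ a + (q.take k).sum) →
      CatValidFrom dyckJ a q := by
  induction q with
  | nil => intro a _ _; trivial
  | cons s t ih =>
    intro a hent hpos
    have hs := hent s (List.mem_cons_self)
    refine ⟨Or.inl ⟨mem_dyckJ.2 (hs.symm.imp id id), ?_⟩, ?_⟩
    · have := hpos 1
      simp [List.take_succ_cons] at this
      omega
    · refine ih (a + s) (fun x hx => hent x (List.mem_cons_of_mem _ hx)) (fun k => ?_)
      have := hpos (k + 1)
      simp [List.take_succ_cons] at this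
      omega

lemma cat_arch_struct {n : ℕ} {l : List ℤ} (hd : DyckCat n l) (ha : IsArch n l)
    (hn : 1 ≤ n) :
    ∃ R : List ℤ, l = 1 :: R ++ [-(1 + R.sum)] ∧ n = R.length + 2 ∧
      (∀ s ∈ R, s = 1 ∨ s = -1) ∧ mps R = 0 := by
  obtain ⟨hlen, hv, hsum⟩ := hd
  -- l is nonempty with head 1
  cases l with
  | nil => simp at hlen; omega
  | cons s t =>
    obtain ⟨hstep, hv'⟩ := hv
    have hs1 : s = 1 := by
      rcases hstep with ⟨hmem, hge⟩ | ⟨_, hlt, _⟩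
      · rcases mem_dyckJ.1 hmem with rfl | rfl
        · omega
        · rfl
      · omega
    subst hs1
    -- t is nonempty
    have htne : t ≠ [] := by
      rintro rfl
      simp at hsum
    set R := t.dropLast with hR
    have htR : R ++ [t.getLast htne] = t := List.dropLast_append_getLast htne
    have hzval : t.getLast htne = -(1 + R.sum) := by
      have : (1 : ℤ) + t.sum = 0 := by simpa using hsum
      rw [← htR] at this
      simp at this
      omega
    have hnlen : n = R.length + 2 := by
      rw [← hlen, ← htR]
      simp
    -- altitudes along R are positive
    have hposR : ∀ k, k ≤ R.length → 0 < 1 + (R.take k).sum := by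
      intro k hk
      have h1 : (1 : ℕ) ≤ k + 1 := by omega
      have h2 : k + 1 < n := by omega
      have := ha (k + 1) h1 h2
      rw [List.take_succ_cons, ← htR, List.take_append_of_le_length hk] at this
      simpa using this
    have hvR : CatValidFrom dyckJ 1 R := by
      rw [← htR] at hv'
      have := (catvalid_append (0 + 1)).1 hv'
      simpa using this.1
    have hent : ∀ s ∈ R, s = 1 ∨ s = -1 := catvalid_entries 1 hvR hposR
    have hmps : mps R = 0 := by
      refine mps_eq_zero (fun k => ?_)
      rcases le_or_gt k R.length with hk | hk
      · have := hposR k hk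
        omega
      · rw [List.take_of_length_le (le_of_lt hk)]
        have := hposR R.length le_rfl
        rw [List.take_length] at this
        omega
    exact ⟨R, by rw [← htR, hzval]; rfl, hnlen, hent, hmps⟩

lemma h_arch_struct {n : ℕ} {l : List ℤ} (hd : HDyck n l) (ha : IsArch n l)
    (hn : 1 ≤ n) :
    ∃ q : List ℤ, l = 1 :: q ++ [-1] ∧ n = q.length + 2 ∧
      HValidFrom 1 q ∧ (∀ k, 1 ≤ 1 + (q.take k).sum) ∧ 1 + q.sum = 1 := by
  obtain ⟨hlen, hv, hsum⟩ := hd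
  cases l with
  | nil => simp at hlen; omega
  | cons s t =>
    obtain ⟨hstep, hv'⟩ := hv
    have hs1 : s = 1 := by
      rcases hstep with rfl | ⟨_, hge⟩ | ⟨_, h0⟩
      · rfl
      · omega
      · omega
    subst hs1
    have htne : t ≠ [] := by
      rintro rfl
      simp at hsum
    set q := t.dropLast with hq
    have htq : q ++ [t.getLast htne] = t := List.dropLast_append_getLast htne
    have hnlen : n = q.length + 2 := by
      rw [← hlen, ← htq]
      simp
    -- altitudes along q are ≥ 1
    have hposq : ∀ k, k ≤ q.length → 1 ≤ 1 + (q.take k).sum := by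
      intro k hk
      have := ha (k + 1) (by omega) (by omega)
      rw [List.take_succ_cons, ← htq, List.take_append_of_le_length hk] at this
      simp at this
      omega
    have hposq' : ∀ k, 1 ≤ 1 + (q.take k).sum := by
      intro k
      rcases le_or_gt k q.length with hk | hk
      · exact hposq k hk
      · rw [List.take_of_length_le (le_of_lt hk)]
        have := hposq q.length le_rfl
        rwa [List.take_length] at this
    -- validity split
    rw [← htq] at hv'
    have hv2 := (hvalid_append (0 + 1)).1 hv'
    have hvq : HValidFrom 1 q := by simpa using hv2.1
    -- final altitude is 1 and last step is -1
    have hendpos : 1 ≤ 1 + q.sum := by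
      have := hposq q.length le_rfl
      rwa [List.take_length] at this
    have hzval : t.getLast htne = -(1 + q.sum) := by
      have : (1 : ℤ) + t.sum = 0 := by simpa using hsum
      rw [← htq] at this
      simp at this
      omega
    have hlast := hv2.2
    simp only [HValidFrom] at hlast
    have h1 : 1 + q.sum = 1 := by
      rcases hlast.1 with h | ⟨h, _⟩ | ⟨h, h'⟩
      · rw [hzval] at h; omega
      · rw [hzval] at h; omega
      · rw [hzval] at h; omega
    refine ⟨q, ?_, hnlen, hvq, hposq', h1⟩
    rw [← htq, hzval, h1]
    norm_num

def Fmap (l : List ℤ) : List ℤ := l.dropLast.map z2o ++ [-(l.dropLast.map z2o).sum]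

def Gmap (l : List ℤ) : List ℤ := 1 :: (psi l.dropLast.tail ++ [-1])

lemma dropLast_helper (x : ℤ) (R : List ℤ) (z : ℤ) : (x :: R ++ [z]).dropLast = x :: R := by
  rw [show x :: R ++ [z] = (x :: R) ++ [z] from rfl, List.dropLast_concat]

lemma dropLast_helper' (x : ℤ) (R : List ℤ) (z : ℤ) : (x :: (R ++ [z])).dropLast = x :: R := by
  rw [← List.cons_append, List.dropLast_concat]

lemma le_z2o (s : ℤ) : s ≤ z2o s := by
  unfold z2o; split <;> omega

lemma take_sum_le_z2o (q : List ℤ) : ∀ k, (q.take k).sum ≤ ((q.map z2o).take k).sum := by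
  induction q with
  | nil => simp
  | cons s t ih =>
    intro k
    cases k with
    | zero => simp
    | succ k =>
      simp only [List.map_cons, List.take_succ_cons, List.sum_cons]
      have h1 := ih k
      have h2 := le_z2o s
      omega

lemma Gmap_mem {n : ℕ} {l : List ℤ} (hn : 1 ≤ n) (hd : DyckCat n l) (ha : IsArch n l) :
    (HDyck n (Gmap l) ∧ IsArch n (Gmap l)) ∧ Fmap (Gmap l) = l := by
  obtain ⟨R, rfl, hnlen, hent, hmps⟩ := cat_arch_struct hd ha hn
  have hG : Gmap (1 :: R ++ [-(1 + R.sum)]) = 1 :: (psi R ++ [-1]) := by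
    rw [Gmap, dropLast_helper]
    rfl
  rw [hG]
  have hsumpsi : (psi R).sum = 0 := by rw [sum_psi hent, hmps]
  refine ⟨⟨⟨?_, ?_, ?_⟩, ?_⟩, ?_⟩
  · -- length
    simp [psi_length, hnlen]
  · -- validity
    refine ⟨Or.inl rfl, ?_⟩
    rw [hvalid_append]
    refine ⟨hvalid_psi hent _ (by rw [hmps]; ring), ?_⟩
    rw [hsumpsi]
    exact ⟨Or.inr (Or.inl ⟨rfl, by norm_num⟩), trivial⟩
  · -- sum
    simp [hsumpsi]
  · -- arch
    intro i h1 h2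
    obtain ⟨j, rfl⟩ : ∃ j, i = j + 1 := ⟨i - 1, by omega⟩
    have hj : j ≤ (psi R).length := by rw [psi_length]; omega
    rw [List.take_succ_cons, List.take_append_of_le_length hj, List.sum_cons]
    have := psi_take hent 1 (by rw [hmps]; ring) j
    omega
  · -- round trip F ∘ G
    rw [Fmap, dropLast_helper', List.map_cons, map_z2o_psi hent]
    have hz : z2o (1 : ℤ) = 1 := by norm_num [z2o]
    rw [hz, List.sum_cons]

lemma Fmap_mem {n : ℕ} {l : List ℤ} (hn : 1 ≤ n) (hd : HDyck n l) (ha : IsArch n l) :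
    (DyckCat n (Fmap l) ∧ IsArch n (Fmap l)) ∧ Gmap (Fmap l) = l := by
  obtain ⟨q, rfl, hnlen, hvq, hposq, hsq⟩ := h_arch_struct hd ha hn
  have hz1 : z2o (1 : ℤ) = 1 := by norm_num [z2o]
  have hF : Fmap (1 :: q ++ [-1]) =
      (1 :: q.map z2o) ++ [-(1 + (q.map z2o).sum)] := by
    rw [Fmap, dropLast_helper, List.map_cons, hz1, List.sum_cons]
  rw [hF]
  have hpos' : ∀ k, 1 ≤ 1 + ((q.map z2o).take k).sum := by
    intro k
    have := take_sum_le_z2o q k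
    have := hposq k
    omega
  have hent' : ∀ s ∈ q.map z2o, s = 1 ∨ s = -1 := by
    intro s hs
    obtain ⟨x, hx, rfl⟩ := List.mem_map.1 hs
    rcases hvalid_entries 1 hvq x hx with rfl | rfl | rfl
    · left; rfl
    · right; norm_num [z2o]
    · left; norm_num [z2o]
  have hh : 1 ≤ 1 + (q.map z2o).sum := by
    have := hpos' (q.map z2o).length
    rwa [List.take_length] at this
  refine ⟨⟨⟨?_, ?_, ?_⟩, ?_⟩, ?_⟩
  · -- length
    simp [hnlen]
  · -- cat validity
    refine ⟨Or.inl ⟨mem_dyckJ.2 (Or.inr rfl), by norm_num⟩, ?_⟩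
    show CatValidFrom dyckJ (0 + 1) (q.map z2o ++ [-(1 + (q.map z2o).sum)])
    rw [show (0 : ℤ) + 1 = 1 by ring, catvalid_append]
    refine ⟨catvalid_of_pm 1 hent' (fun k => by have := hpos' k; omega), ?_⟩
    set h' : ℤ := 1 + (q.map z2o).sum with hh'
    refine ⟨?_, trivial⟩
    rcases eq_or_lt_of_le hh with heq | hlt
    · left
      refine ⟨mem_dyckJ.2 (Or.inl (by omega)), by omega⟩
    · right
      refine ⟨rfl, by omega, ?_⟩
      intro hmem
      rcases mem_dyckJ.1 hmem with h | h <;> omega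
  · -- sum
    simp
  · -- arch
    intro i h1 h2
    obtain ⟨j, rfl⟩ : ∃ j, i = j + 1 := ⟨i - 1, by omega⟩
    have hj : j + 1 ≤ (1 :: q.map z2o).length := by simp; omega
    rw [List.take_append_of_le_length hj, List.take_succ_cons, List.sum_cons]
    have := hpos' j
    omega
  · -- round trip G ∘ F
    rw [Gmap, dropLast_helper]
    have := (psi_map_z2o 1 hvq hposq hsq).1
    rw [show ((1 : ℤ) :: List.map z2o q).tail = List.map z2o q from rfl, this]
    exact List.cons_append.symm


/-- **Bijection on arches.** For `n ≥ 1`, the number of arches of Dyck paths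
with catastrophes of length `n` equals the number of arches of 1-horizontal
Dyck paths of length `n`. -/
theorem dyckCat_arch_eq_hDyck_arch (n : ℕ) (hn : 1 ≤ n) :
    Nat.card {l : List ℤ // DyckCat n l ∧ IsArch n l} =
      Nat.card {l : List ℤ // HDyck n l ∧ IsArch n l} := by
  apply Nat.card_congr
  exact
    { toFun := fun x => ⟨Gmap x.1, (Gmap_mem hn x.2.1 x.2.2).1⟩
      invFun := fun x => ⟨Fmap x.1, (Fmap_mem hn x.2.1 x.2.2).1⟩
      left_inv := fun x => Subtype.ext (Gmap_mem hn x.2.1 x.2.2).2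
      right_inv := fun x => Subtype.ext (Fmap_mem hn x.2.1 x.2.2).2 }
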